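/- arXiv:2012.11182 — 2 statements merged into one kernel-verified Lean document; each statement's English description precedes it below -/
import Mathlib

section
/- In a rooted directed graph where every vertex is reachable from the root, every vertex other than the root that has a strict dominator has a unique immediate dominator: a strict dominator d of v such that every other strict dominator of v strictly dominates d. -/
variable {V : Type*}

/-- `p` is a path (finite walk) from `r` to `b` in the directed graph `adj`. -/
def IsPath (adj : V → V → Prop) (r b : V) (p : List V) : Prop :=
  p.head? = some r ∧ p.getLast? = some b ∧ p.Chain' adj

/-- `a` dominates `b` (w.r.t. root `r`): every path from `r` to `b` contains `a`. -/
def Dom (adj : V → V → Prop) (r a b : V) : Prop :=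
  ∀ p : List V, IsPath adj r b p → a ∈ p

/-- `a` strictly dominates `b`: `a` dominates `b` and `a ≠ b`. -/
def StrictDom (adj : V → V → Prop) (r a b : V) : Prop :=
  Dom adj r a b ∧ a ≠ b

/-- `v` is reachable from the root `r`. -/
def Reach (adj : V → V → Prop) (r v : V) : Prop :=
  ∃ p : List V, IsPath adj r v p

lemma getElem_take' (l : List V) (n m : ℕ) (h2 : m < (l.take n).length) :
    (l.take n)[m] = l[m]'(by simp at h2; omega) := by
  have h := List.getElem?_take_of_lt (l := l) (j := n) (i := m) (by simp at h2; omega)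
  rw [List.getElem?_eq_getElem h2, List.getElem?_eq_getElem (by simp at h2; omega)] at h
  exact Option.some.inj h

lemma isPath_ne_nil {adj : V → V → Prop} {r v : V} {p : List V} (h : IsPath adj r v p) :
    p ≠ [] := by
  rintro rfl; simp [IsPath] at h

lemma isPath_getLast {adj : V → V → Prop} {r v : V} {p : List V} (h : IsPath adj r v p)
    (h0 : 0 < p.length) : p[p.length - 1] = v := by
  have h1 := p.getLast?_eq_getElem?
  rw [h.2.1, List.getElem?_eq_getElem (by omega)] at h1
  exact (Option.some.inj h1).symm

lemma isPath_take {adj : V → V → Prop} {r v : V} {p : List V} (h : IsPath adj r v p)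
    (i : ℕ) (hi : i < p.length) : IsPath adj r p[i] (p.take (i + 1)) := by
  obtain ⟨h1, h2, h3⟩ := h
  refine ⟨?_, ?_, h3.take _⟩
  · cases p with
    | nil => simp at hi
    | cons a t => simpa using h1
  · rw [List.getLast?_eq_getElem?]
    have hl : (p.take (i+1)).length = i + 1 := by rw [List.length_take]; omega
    rw [hl, Nat.add_sub_cancel, List.getElem?_eq_getElem (by omega)]
    exact congrArg some (getElem_take' p (i+1) i (by omega))

lemma isPath_join {adj : V → V → Prop} {r v b : V} {p q : List V}
    (hq : IsPath adj r b q) (hp : IsPath adj r v p)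
    (i : ℕ) (hi : i < p.length) (hb : p[i] = b) :
    IsPath adj r v (q ++ p.drop (i + 1)) := by
  have hqne : q ≠ [] := isPath_ne_nil hq
  obtain ⟨hq1, hq2, hq3⟩ := hq
  obtain ⟨hp1, hp2, hp3⟩ := hp
  refine ⟨?_, ?_, ?_⟩
  · rw [List.head?_append_of_ne_nil _ hqne]; exact hq1
  · rcases eq_or_ne (p.drop (i+1)) [] with hd | hd
    · have hlen : i = p.length - 1 := by
        have := List.drop_eq_nil_iff.mp hd
        omega
      have hv : p[i] = v := by
        subst hlen
        exact isPath_getLast ⟨hp1, hp2, hp3⟩ (by omega)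
      rw [hd, List.append_nil, hq2, ← hb, hv]
    · rw [List.getLast?_append_of_ne_nil _ hd]
      calc (p.drop (i+1)).getLast? = p.getLast? := by
            conv_rhs => rw [← List.take_append_drop (i+1) p]
            rw [List.getLast?_append_of_ne_nil _ hd]
        _ = some v := hp2
  · show List.IsChain adj _
    rw [List.isChain_append]
    refine ⟨hq3, hp3.drop _, ?_⟩
    intro x hx y hy
    rw [hq2] at hx
    have hx' : x = b := by have := hx; simp at this; exact this.symm
    rcases eq_or_ne (p.drop (i+1)) [] with hd | hd
    · rw [hd] at hy; simp at hy
    · have hlen : i + 1 < p.length := by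
        by_contra hle
        push_neg at hle
        exact hd (List.drop_eq_nil_iff.mpr (by omega))
      have hy' : y = p[i+1] := by
        have h5 : (p.drop (i+1)).head? = some (p[i+1]) := by
          rw [List.head?_eq_getElem?, List.getElem?_drop]
          simpa using List.getElem?_eq_getElem hlen
        rw [h5] at hy
        have := hy; simp at this; exact this.symm
      subst hx' hy'
      rw [← hb]
      have := List.isChain_iff_getElem.mp hp3 i (by omega)
      simpa using this

lemma exists_nodup_path {adj : V → V → Prop} {r v : V} (h : Reach adj r v) :
    ∃ p, IsPath adj r v p ∧ p.Nodup := by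
  have hex : ∃ n, ∃ p : List V, IsPath adj r v p ∧ p.length = n := by
    obtain ⟨p, hp⟩ := h
    exact ⟨p.length, p, hp, rfl⟩
  classical
  obtain ⟨p, hp, hlen⟩ := Nat.find_spec hex
  refine ⟨p, hp, ?_⟩
  by_contra hnd
  rw [List.nodup_iff_getElem?_ne_getElem?] at hnd
  push_neg at hnd
  obtain ⟨i, j, hij, hjlen, heq⟩ := hnd
  have hilen : i < p.length := by omega
  have heq' : p[i] = p[j] := by
    rw [List.getElem?_eq_getElem hilen, List.getElem?_eq_getElem hjlen] at heq
    exact Option.some.inj heq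
  set q := p.take (i + 1) ++ p.drop (j + 1) with hq
  have hpq : IsPath adj r v q := by
    have h1 := isPath_take hp i hilen
    exact isPath_join (heq' ▸ h1) hp j hjlen rfl
  have hql : q.length < p.length := by
    have hqlen : q.length = min (i+1) p.length + (p.length - (j + 1)) := by
      simp [hq]
    omega
  have hfind : Nat.find hex ≤ q.length := Nat.find_le ⟨q, hpq, rfl⟩
  omega

lemma dom_of_earlier {adj : V → V → Prop} {r v : V} {p : List V}
    (hp : IsPath adj r v p) (hnd : p.Nodup) {i j : ℕ}
    (hi : i < p.length) (hj : j < p.length) (hij : i < j)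
    (hdom : Dom adj r p[i] v) : Dom adj r p[i] p[j] := by
  intro q hq
  by_contra ha
  have hjoin : IsPath adj r v (q ++ p.drop (j + 1)) := isPath_join hq hp j hj rfl
  have hmem := hdom _ hjoin
  rcases List.mem_append.mp hmem with h | h
  · exact ha h
  · have h1 : p[i] ∈ p.take (j + 1) := by
      have hlt : i < (p.take (j+1)).length := by
        simp [List.length_take]; omega
      have := getElem_take' p (j+1) i hlt
      exact this ▸ List.getElem_mem hlt
    have hnd' := hnd
    rw [← List.take_append_drop (j+1) p] at hnd'
    exact (List.disjoint_of_nodup_append hnd') h1 h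

lemma dom_antisymm {adj : V → V → Prop} {r a b : V}
    (hra : Reach adj r a) (hab : Dom adj r a b) (hba : Dom adj r b a)
    (hne : a ≠ b) : False := by
  obtain ⟨p, hp, hnd⟩ := exists_nodup_path hra
  obtain ⟨j, hj, hbj⟩ := List.getElem_of_mem (hba p hp)
  have hpath : IsPath adj r b (p.take (j + 1)) := hbj ▸ isPath_take hp j hj
  obtain ⟨k, hk, hak⟩ := List.getElem_of_mem (hab _ hpath)
  have hk' : k < p.length := by
    simp [List.length_take] at hk; omega
  have hpk : p[k] = a := by
    have := getElem_take' p (j+1) k hk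
    rw [this] at hak; exact hak
  have hkj : k ≤ j := by
    simp [List.length_take] at hk; omega
  have h0 : 0 < p.length := List.length_pos_iff.mpr (isPath_ne_nil hp)
  have hlast : p[p.length - 1] = a := isPath_getLast hp h0
  have hkeq : k = p.length - 1 :=
    hnd.getElem_inj_iff.mp (by rw [hpk, hlast])
  have hjeq : j = p.length - 1 := by omega
  have hkj2 : k = j := by omega
  subst hkj2
  exact hne (hpk.symm.trans hbj)

/-- In a finite rooted directed graph with all vertices reachable from the root, every
vertex other than the root that has a strict dominator has a unique immediate
dominator: a strict dominator `d` of `v` such that every other strict dominator of `v`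
strictly dominates `d`. -/
theorem unique_immediate_dominator [Fintype V] (adj : V → V → Prop) (r v : V)
    (hreach : ∀ u : V, Reach adj r u) (hv : v ≠ r)
    (hex : ∃ d, StrictDom adj r d v) :
    ∃! d : V, StrictDom adj r d v ∧
      ∀ d', StrictDom adj r d' v → d' ≠ d → StrictDom adj r d' d := by
  classical
  obtain ⟨p, hp, hnd⟩ := exists_nodup_path (hreach v)
  set F : Finset V := Finset.univ.filter (fun d => StrictDom adj r d v) with hF
  have hFne : F.Nonempty := by
    obtain ⟨d, hd⟩ := hex
    exact ⟨d, by simp [hF, hd]⟩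
  obtain ⟨d, hdF, hdmax⟩ := F.exists_max_image (fun x => p.idxOf x) hFne
  have hdS : StrictDom adj r d v := by simpa [hF] using hdF
  have hmem : ∀ x, StrictDom adj r x v → x ∈ p := fun x hx => hx.1 p hp
  have key : ∀ d', StrictDom adj r d' v → d' ≠ d → StrictDom adj r d' d := by
    intro d' hd' hne
    have hd'F : d' ∈ F := by simp [hF, hd']
    have hle : p.idxOf d' ≤ p.idxOf d := hdmax d' hd'F
    have hid : p.idxOf d < p.length := List.idxOf_lt_length_iff.mpr (hmem d hdS)
    have hid' : p.idxOf d' < p.length := List.idxOf_lt_length_iff.mpr (hmem d' hd')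
    have hgd : p[p.idxOf d] = d := List.getElem_idxOf hid
    have hgd' : p[p.idxOf d'] = d' := List.getElem_idxOf hid'
    have hlt : p.idxOf d' < p.idxOf d := by
      rcases lt_or_eq_of_le hle with h | h
      · exact h
      · exfalso
        apply hne
        have hgd'' : p[p.idxOf d] = d' := by
          have h2 := List.getElem?_eq_getElem hid'
          rw [hgd', h] at h2
          rw [List.getElem?_eq_getElem hid] at h2
          exact (Option.some.inj h2)
        exact hgd''.symm.trans hgd
    have := dom_of_earlier hp hnd hid' hid hlt (by rw [hgd']; exact hd'.1)
    rw [hgd', hgd] at this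
    exact ⟨this, hne⟩
  refine ⟨d, ⟨hdS, key⟩, ?_⟩
  rintro y ⟨hyS, hykey⟩
  by_contra hne
  have h1 : StrictDom adj r d y := hykey d hdS (Ne.symm hne)
  have h2 : StrictDom adj r y d := key y hyS hne
  exact dom_antisymm (hreach d) h1.1 h2.1 h1.2
end

section
/- The strict dominators of any vertex v (in a rooted graph with all vertices reachable from the root) are linearly ordered by the dominance relation: for any two distinct strict dominators a and b of v, either a dominates b or b dominates a. -/
variable {V : Type*}

/-- For any member of a list, the suffix starting at its *last* occurrence. -/
lemma mem_suffix_head_not_tail {x : V} {l : List V} (h : x ∈ l) :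
    ∃ t, t <:+ l ∧ t.head? = some x ∧ x ∉ t.tail := by
  induction l with
  | nil => cases h
  | cons y ys ih =>
    by_cases hx : x ∈ ys
    · obtain ⟨t, ht, hh, hnt⟩ := ih hx
      exact ⟨t, ht.trans (List.suffix_cons y ys), hh, hnt⟩
    · have hxy : x = y := by
        rcases List.mem_cons.1 h with h' | h'
        · exact h'
        · exact absurd h' hx
      exact ⟨y :: ys, List.suffix_refl _, by simp [hxy], by simpa [hxy] using hx⟩

/-- For any member of a list, some suffix starts at it. -/
lemma mem_suffix_head {x : V} {l : List V} (h : x ∈ l) :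
    ∃ t, t <:+ l ∧ t.head? = some x := by
  obtain ⟨t, ht, hh, _⟩ := mem_suffix_head_not_tail h
  exact ⟨t, ht, hh⟩

/-- A nonempty suffix has the same last element. -/
lemma suffix_getLast? {t l : List V} (h : t <:+ l) (hne : t ≠ []) :
    t.getLast? = l.getLast? := by
  obtain ⟨u, rfl⟩ := h
  rw [List.getLast?_append]
  cases ht : t.getLast? with
  | none => exact absurd (List.getLast?_eq_none_iff.1 ht) hne
  | some x => simp

/-- Splicing a path from `r` to `x` with a chain from `x` to `v`. -/
lemma path_append {adj : V → V → Prop} {r x v : V} {q t : List V}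
    (hq : IsPath adj r x q) (hth : t.head? = some x) (htl : t.getLast? = some v)
    (htc : t.Chain' adj) : IsPath adj r v (q ++ t.tail) := by
  obtain ⟨hq1, hq2, hq3⟩ := hq
  have hqne : q ≠ [] := by intro h; simp [h] at hq1
  obtain ⟨y, t', rfl⟩ : ∃ y t', t = y :: t' := by
    cases t with
    | nil => simp at hth
    | cons y t' => exact ⟨y, t', rfl⟩
  have hyx : y = x := by simpa using hth
  subst hyx
  refine ⟨by simpa [List.head?_append, hqne] using hq1, ?_, ?_⟩
  · cases t' with
    | nil =>
      have : y = v := by simpa using htl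
      simpa [← this] using hq2
    | cons z t'' =>
      rw [List.getLast?_append]
      have h1 : (z :: t'').getLast? = some v := by
        simpa [List.getLast?_cons_cons] using htl
      simp [h1]
  · show List.IsChain adj (q ++ t')
    rw [List.isChain_append]
    refine ⟨hq3, (List.isChain_cons.1 htc).2, ?_⟩
    intro u hu w hw
    rw [hq2] at hu
    have : y = u := by simpa using hu
    subst this
    exact (List.isChain_cons.1 htc).1 w hw

/-- The strict dominators of any vertex `v` (all vertices reachable from the root) are
linearly ordered by dominance: for distinct strict dominators `a` and `b` of `v`,
either `a` dominates `b` or `b` dominates `a`. -/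
theorem strict_dominators_linearly_ordered (adj : V → V → Prop) (r v : V)
    (hreach : ∀ u : V, Reach adj r u) (a b : V)
    (ha : StrictDom adj r a v) (hb : StrictDom adj r b v) (hab : a ≠ b) :
    Dom adj r a b ∨ Dom adj r b a := by
  by_contra hcon
  push_neg at hcon
  obtain ⟨hnab, hnba⟩ := hcon
  rw [Dom] at hnab hnba
  push_neg at hnab hnba
  obtain ⟨q, hq, haq⟩ := hnab
  obtain ⟨s, hs, hbs⟩ := hnba
  obtain ⟨p, hp⟩ := hreach v
  have hbp : b ∈ p := hb.1 p hp
  obtain ⟨t, hts, hth, hbt⟩ := mem_suffix_head_not_tail hbp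
  have htne : t ≠ [] := by intro h; simp [h] at hth
  have htl : t.getLast? = some v := by rw [suffix_getLast? hts htne]; exact hp.2.1
  have htc : t.Chain' adj := hp.2.2.suffix hts
  have hpath1 := path_append hq hth htl htc
  have hat : a ∈ t.tail := by
    rcases List.mem_append.1 (ha.1 _ hpath1) with h | h
    · exact absurd h haq
    · exact h
  obtain ⟨t', hts', hth'⟩ := mem_suffix_head hat
  have ht'ne : t' ≠ [] := by intro h; simp [h] at hth'
  have httne : t.tail ≠ [] := by intro h; rw [h] at hat; cases hat
  have ht'l : t'.getLast? = some v := by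
    rw [suffix_getLast? hts' ht'ne, suffix_getLast? (List.tail_suffix t) httne]; exact htl
  have ht'c : t'.Chain' adj := (htc.suffix (List.tail_suffix t)).suffix hts'
  have hpath2 := path_append hs hth' ht'l ht'c
  have hbt' : b ∈ t'.tail := by
    rcases List.mem_append.1 (hb.1 _ hpath2) with h | h
    · exact absurd h hbs
    · exact h
  exact hbt (hts'.subset ((List.tail_suffix t').subset hbt'))
end
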